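/- arXiv:2204.07261 — 2 statements merged into one kernel-verified Lean document; each statement's English description precedes it below -/
import Mathlib

section
/- Boundedness of hidden states and Jacobians (Lemma B.1): Let c_α > 0 and let the weights α satisfy L ≥ 5 c_α and ‖α‖_{F,∞} ≤ c_α L^{-1/2}. Under activation assumption (i), for every input x ∈ ℝ^d, every k = 0, 1, …, L, and every standard basis vector e_m of ℝ^d, one has ‖x‖₂ e^{-2 c_α} ≤ ‖h_k^x(α)‖₂ ≤ ‖x‖₂ e^{1.1 c_α} and ‖M_k^x(α) e_m‖₂ ≤ e^{c_α}. -/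
open Finset

noncomputable section

/-- Euclidean norm of a vector in `ℝ^d`. -/
def vnorm {d : ℕ} (v : Fin d → ℝ) : ℝ := Real.sqrt (∑ i, v i ^ 2)

/-- Frobenius norm of a `d × d` real matrix. -/
def frobNorm {d : ℕ} (A : Fin d → Fin d → ℝ) : ℝ := Real.sqrt (∑ i, ∑ j, A i j ^ 2)

/-- Matrix-vector product. -/
def mulVec' {d : ℕ} (A : Fin d → Fin d → ℝ) (v : Fin d → ℝ) : Fin d → ℝ :=
  fun i => ∑ j, A i j * v j

/-- Matrix-matrix product. -/
def matMul' {d : ℕ} (A B : Fin d → Fin d → ℝ) : Fin d → Fin d → ℝ :=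
  fun i j => ∑ l, A i l * B l j

/-- Hidden states of the residual network: `h_0 = x` and
`h_{k+1} = h_k + L^{-1/2} σ_d(α_{k+1} h_k)`, where the weight of the (1-based)
layer `k+1` is stored at the (0-based) index `k`. -/
def hiddenState {d L : ℕ} (σ : ℝ → ℝ) (α : Fin L → Fin d → Fin d → ℝ) (x : Fin d → ℝ) :
    ℕ → Fin d → ℝ
  | 0 => x
  | k + 1 =>
      if h : k < L then
        fun i => hiddenState σ α x k i + (Real.sqrt L)⁻¹ * σ (mulVec' (α ⟨k, h⟩) (hiddenState σ α x k) i)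
      else hiddenState σ α x k

/-- One factor `I_d + L^{-1/2} diag(σ'(α_{k+1} h_k)) α_{k+1}` of the layer-to-output
Jacobian (0-based index `k`). -/
def layerJac {d L : ℕ} (σ : ℝ → ℝ) (α : Fin L → Fin d → Fin d → ℝ) (x : Fin d → ℝ)
    (k : ℕ) (h : k < L) : Fin d → Fin d → ℝ :=
  fun i i' => (if i = i' then (1 : ℝ) else 0) +
    (Real.sqrt L)⁻¹ * deriv σ (mulVec' (α ⟨k, h⟩) (hiddenState σ α x k) i) * α ⟨k, h⟩ i i'

/-- Layer-to-output Jacobian `M_k^x(α) = ∂h_L/∂h_k`, where `k` is the 1-based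
paper index, `0 ≤ k ≤ L`. -/
def jacM {d L : ℕ} (σ : ℝ → ℝ) (α : Fin L → Fin d → Fin d → ℝ) (x : Fin d → ℝ) :
    ℕ → Fin d → Fin d → ℝ
  | k =>
      if h : k < L then matMul' (jacM σ α x (k + 1)) (layerJac σ α x k h)
      else fun i i' => if i = i' then 1 else 0
  termination_by k => L - k
  decreasing_by omega

/-- Mean-squared training loss `J_L`. -/
def loss {d L N : ℕ} (σ : ℝ → ℝ) (x y : Fin N → Fin d → ℝ)
    (α : Fin L → Fin d → Fin d → ℝ) : ℝ :=
  (1 / (2 * N)) * ∑ i, ∑ j, (y i j - hiddenState σ α (x i) L j) ^ 2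

/-- Partial derivative of the loss with respect to the `(m,n)` entry of the
`k`-th weight matrix. -/
def gradEntry {d L N : ℕ} (σ : ℝ → ℝ) (x y : Fin N → Fin d → ℝ)
    (α : Fin L → Fin d → Fin d → ℝ) (k : Fin L) (m n : Fin d) : ℝ :=
  fderiv ℝ (loss σ x y) α (Pi.single k (Pi.single m (Pi.single n 1)))

/-- `G_k^{x,y}(α) = (M_k^x(α))ᵀ (ŷ(x,α) − y)`; `k` is the 1-based paper index. -/
def Gvec {d L : ℕ} (σ : ℝ → ℝ) (α : Fin L → Fin d → Fin d → ℝ) (x y : Fin d → ℝ)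
    (k : ℕ) : Fin d → ℝ :=
  fun n => ∑ j, jacM σ α x k j n * (hiddenState σ α x L j - y j)

/-- Assumption (i) on the activation function: `σ ∈ C²`, `σ'(0) = 1`, and
`|σ(z)| ≤ |z|`, `|σ'(z)| ≤ 1`, `|σ''(z)| ≤ 1` for all `z`. -/
def ActAssump (σ : ℝ → ℝ) : Prop :=
  ContDiff ℝ 2 σ ∧ deriv σ 0 = 1 ∧
    ∀ z : ℝ, |σ z| ≤ |z| ∧ |deriv σ z| ≤ 1 ∧ |deriv (deriv σ) z| ≤ 1

section Helpers

variable {d : ℕ}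

lemma vnorm_nonneg (v : Fin d → ℝ) : 0 ≤ vnorm v := Real.sqrt_nonneg _

lemma vnorm_eq_norm (v : Fin d → ℝ) :
    vnorm v = ‖(WithLp.equiv 2 (Fin d → ℝ)).symm v‖ := by
  rw [EuclideanSpace.norm_eq]
  simp [vnorm, Real.norm_eq_abs, sq_abs]

lemma vnorm_add_le (u v : Fin d → ℝ) : vnorm (u + v) ≤ vnorm u + vnorm v := by
  simp only [vnorm_eq_norm]
  exact norm_add_le ((WithLp.equiv 2 (Fin d → ℝ)).symm u) ((WithLp.equiv 2 (Fin d → ℝ)).symm v)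

lemma sub_vnorm_le (u v : Fin d → ℝ) : vnorm u - vnorm v ≤ vnorm (u + v) := by
  simp only [vnorm_eq_norm]
  have := norm_add_le ((WithLp.equiv 2 (Fin d → ℝ)).symm (u + v))
    ((WithLp.equiv 2 (Fin d → ℝ)).symm (-v))
  rw [WithLp.equiv_symm_apply] at this ⊢
  rw [← WithLp.toLp_add, WithLp.toLp_neg, norm_neg, add_neg_cancel_right] at this
  linarith

lemma vnorm_mono (u v : Fin d → ℝ) (h : ∀ i, |u i| ≤ |v i|) : vnorm u ≤ vnorm v := by
  apply Real.sqrt_le_sqrt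
  apply Finset.sum_le_sum
  intro i _
  rw [← sq_abs (u i), ← sq_abs (v i)]
  exact pow_le_pow_left₀ (abs_nonneg _) (h i) 2

lemma vnorm_smul (c : ℝ) (v : Fin d → ℝ) :
    vnorm (fun i => c * v i) = |c| * vnorm v := by
  simp only [vnorm, mul_pow, ← Finset.mul_sum]
  rw [Real.sqrt_mul (sq_nonneg c), Real.sqrt_sq_eq_abs]

lemma frobNorm_nonneg (A : Fin d → Fin d → ℝ) : 0 ≤ frobNorm A := Real.sqrt_nonneg _

lemma vnorm_mulVec_le (A : Fin d → Fin d → ℝ) (v : Fin d → ℝ) :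
    vnorm (mulVec' A v) ≤ frobNorm A * vnorm v := by
  rw [vnorm, frobNorm, vnorm, ← Real.sqrt_mul (by positivity)]
  apply Real.sqrt_le_sqrt
  rw [Finset.sum_mul]
  exact Finset.sum_le_sum fun i _ => Finset.sum_mul_sq_le_sq_mul_sq _ _ _

lemma vnorm_basis (m : Fin d) : vnorm (fun j => if j = m then (1 : ℝ) else 0) = 1 := by
  simp [vnorm, apply_ite (· ^ (2:ℕ)), Finset.sum_ite_eq']

lemma mulVec_matMul (A B : Fin d → Fin d → ℝ) (v : Fin d → ℝ) :
    mulVec' (matMul' A B) v = mulVec' A (mulVec' B v) := by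
  funext i
  simp only [mulVec', matMul', Finset.sum_mul, Finset.mul_sum]
  rw [Finset.sum_comm]
  exact Finset.sum_congr rfl fun l _ => Finset.sum_congr rfl fun j _ => by ring

lemma mulVec_id (v : Fin d → ℝ) :
    mulVec' (fun i i' => if i = i' then (1:ℝ) else 0) v = v := by
  funext i
  simp [mulVec', ite_mul, Finset.sum_ite_eq]

end Helpers

example : True := trivial

set_option maxHeartbeats 1000000 in
/-- **Boundedness of hidden states and Jacobians (Lemma B.1).** -/
theorem statement0 {d L : ℕ} (hd : 1 ≤ d) (hL : 1 ≤ L)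
    {σ : ℝ → ℝ} (hσ : ActAssump σ)
    (cα : ℝ) (hcα : 0 < cα) (hLα : 5 * cα ≤ (L : ℝ))
    (α : Fin L → Fin d → Fin d → ℝ)
    (hα : ∀ k, frobNorm (α k) ≤ cα * (Real.sqrt L)⁻¹)
    (x : Fin d → ℝ) :
    ∀ k ≤ L,
      (vnorm x * Real.exp (-(2 * cα)) ≤ vnorm (hiddenState σ α x k) ∧
        vnorm (hiddenState σ α x k) ≤ vnorm x * Real.exp (1.1 * cα)) ∧
      ∀ m : Fin d, vnorm (fun i => jacM σ α x k i m) ≤ Real.exp cα := by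
  obtain ⟨hσ2, hσ'0, hσb⟩ := hσ
  have hLpos : (0 : ℝ) < L := by exact_mod_cast hL
  have hsL : Real.sqrt L * Real.sqrt L = (L : ℝ) := Real.mul_self_sqrt (le_of_lt hLpos)
  have hsLpos : 0 < Real.sqrt L := Real.sqrt_pos.2 hLpos
  set t : ℝ := cα / L with ht_def
  have ht0 : 0 < t := div_pos hcα hLpos
  have ht5 : t ≤ 1 / 5 := by
    rw [div_le_div_iff₀ hLpos (by norm_num)]
    linarith
  have htL : t * L = cα := by
    rw [ht_def]
    field_simp
  -- bound for the α-times-vector map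
  have hαv : ∀ (k : Fin L) (u : Fin d → ℝ),
      vnorm (mulVec' (α k) u) ≤ cα * (Real.sqrt L)⁻¹ * vnorm u := by
    intro k u
    calc vnorm (mulVec' (α k) u) ≤ frobNorm (α k) * vnorm u := vnorm_mulVec_le _ _
      _ ≤ cα * (Real.sqrt L)⁻¹ * vnorm u :=
        mul_le_mul_of_nonneg_right (hα k) (vnorm_nonneg u)
  have hinv : (Real.sqrt L)⁻¹ * (cα * (Real.sqrt L)⁻¹) = t := by
    have hLinv : ((L:ℝ))⁻¹ = (Real.sqrt L)⁻¹ * (Real.sqrt L)⁻¹ := by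
      rw [← mul_inv, hsL]
    rw [ht_def, div_eq_mul_inv, hLinv]
    ring
  -- hidden state bounds by induction
  have main : ∀ k, k ≤ L →
      vnorm x * (1 - t) ^ k ≤ vnorm (hiddenState σ α x k) ∧
      vnorm (hiddenState σ α x k) ≤ vnorm x * (1 + t) ^ k := by
    intro k
    induction k with
    | zero =>
      intro _
      have h0 : hiddenState σ α x 0 = x := rfl
      rw [h0]
      norm_num
    | succ k ih =>
      intro hk
      obtain ⟨hlow, hup⟩ := ih (Nat.le_of_succ_le hk)
      have hkL : k < L := hk
      have heq : hiddenState σ α x (k + 1) = hiddenState σ α x k +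
          (fun i => (Real.sqrt L)⁻¹ * σ (mulVec' (α ⟨k, hkL⟩) (hiddenState σ α x k) i)) := by
        simp only [hiddenState, dif_pos hkL]
        rfl
      set h := hiddenState σ α x k with hh
      set s : Fin d → ℝ :=
        fun i => (Real.sqrt L)⁻¹ * σ (mulVec' (α ⟨k, hkL⟩) h i) with hs
      have hsb : vnorm s ≤ t * vnorm h := by
        have h1 : vnorm s ≤ (Real.sqrt L)⁻¹ * vnorm (mulVec' (α ⟨k, hkL⟩) h) := by
          have := vnorm_smul (Real.sqrt L)⁻¹ (fun i => σ (mulVec' (α ⟨k, hkL⟩) h i))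
          calc vnorm s ≤ vnorm (fun i => (Real.sqrt L)⁻¹ * σ (mulVec' (α ⟨k, hkL⟩) h i)) := le_of_eq rfl
            _ = |(Real.sqrt L)⁻¹| * vnorm (fun i => σ (mulVec' (α ⟨k, hkL⟩) h i)) := this
            _ ≤ (Real.sqrt L)⁻¹ * vnorm (mulVec' (α ⟨k, hkL⟩) h) := by
                rw [abs_of_nonneg (by positivity)]
                exact mul_le_mul_of_nonneg_left
                  (vnorm_mono _ _ fun i => (hσb _).1) (by positivity)
        calc vnorm s ≤ (Real.sqrt L)⁻¹ * vnorm (mulVec' (α ⟨k, hkL⟩) h) := h1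
          _ ≤ (Real.sqrt L)⁻¹ * (cα * (Real.sqrt L)⁻¹ * vnorm h) :=
            mul_le_mul_of_nonneg_left (hαv _ _) (by positivity)
          _ = t * vnorm h := by rw [← mul_assoc, hinv]
      have hn := vnorm_nonneg h
      constructor
      · rw [heq]
        have h2 : vnorm h - vnorm s ≤ vnorm (h + s) := sub_vnorm_le h s
        have h3 : vnorm x * (1 - t) ^ (k + 1) ≤ (1 - t) * vnorm h := by
          rw [pow_succ]
          have := mul_le_mul_of_nonneg_left hlow (by linarith : (0:ℝ) ≤ 1 - t)
          nlinarith
        nlinarith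
      · rw [heq]
        have h2 : vnorm (h + s) ≤ vnorm h + vnorm s := vnorm_add_le h s
        have h3 : (1 + t) * vnorm h ≤ vnorm x * (1 + t) ^ (k + 1) := by
          rw [pow_succ]
          have := mul_le_mul_of_nonneg_left hup (by linarith : (0:ℝ) ≤ 1 + t)
          nlinarith
        nlinarith
  -- Jacobian operator bound by downward induction
  have jac : ∀ n k (v : Fin d → ℝ), L ≤ k + n →
      vnorm (mulVec' (jacM σ α x k) v) ≤ (1 + t) ^ n * vnorm v := by
    intro n
    induction n with
    | zero =>
      intro k v hkn
      have hkL : ¬ k < L := by omega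
      rw [jacM, dif_neg hkL, mulVec_id]
      simp
    | succ n ih =>
      intro k v hkn
      have hone : (1 : ℝ) ≤ (1 + t) ^ (n + 1) := one_le_pow₀ (by linarith)
      by_cases hkL : k < L
      · rw [jacM, dif_pos hkL, mulVec_matMul]
        have hlayer : vnorm (mulVec' (layerJac σ α x k hkL) v) ≤ (1 + t) * vnorm v := by
          have heq : mulVec' (layerJac σ α x k hkL) v = v +
              (fun i => (Real.sqrt L)⁻¹ *
                (deriv σ (mulVec' (α ⟨k, hkL⟩) (hiddenState σ α x k) i) *
                  mulVec' (α ⟨k, hkL⟩) v i)) := by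
            funext i
            simp only [layerJac, mulVec', Pi.add_apply, add_mul, Finset.sum_add_distrib,
              ite_mul, one_mul, zero_mul, Finset.sum_ite_eq, Finset.mem_univ, if_true]
            congr 1
            rw [Finset.mul_sum, Finset.mul_sum]
            apply Finset.sum_congr rfl
            intro j _
            ring
          rw [heq]
          have hwb : vnorm (fun i => (Real.sqrt L)⁻¹ * (deriv σ (mulVec' (α ⟨k, hkL⟩) (hiddenState σ α x k) i) * mulVec' (α ⟨k, hkL⟩) v i))
              ≤ t * vnorm v := by
            have hmono : vnorm (fun i => (Real.sqrt L)⁻¹ * (deriv σ (mulVec' (α ⟨k, hkL⟩) (hiddenState σ α x k) i) * mulVec' (α ⟨k, hkL⟩) v i))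
                ≤ vnorm (fun i => (Real.sqrt L)⁻¹ * mulVec' (α ⟨k, hkL⟩) v i) := by
              apply vnorm_mono
              intro i
              rw [abs_mul, abs_mul, abs_mul]
              have h1 : |deriv σ (mulVec' (α ⟨k, hkL⟩) (hiddenState σ α x k) i)| ≤ 1 := (hσb _).2.1
              have h2 : (0:ℝ) ≤ |(Real.sqrt L)⁻¹| := abs_nonneg _
              calc |(Real.sqrt L)⁻¹| * (|deriv σ (mulVec' (α ⟨k, hkL⟩) (hiddenState σ α x k) i)| *
                    |mulVec' (α ⟨k, hkL⟩) v i|)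
                  ≤ |(Real.sqrt L)⁻¹| * (1 * |mulVec' (α ⟨k, hkL⟩) v i|) :=
                    mul_le_mul_of_nonneg_left
                      (mul_le_mul_of_nonneg_right h1 (abs_nonneg _)) h2
                _ = |(Real.sqrt L)⁻¹| * |mulVec' (α ⟨k, hkL⟩) v i| := by ring
            calc vnorm (fun i => (Real.sqrt L)⁻¹ * (deriv σ (mulVec' (α ⟨k, hkL⟩) (hiddenState σ α x k) i) * mulVec' (α ⟨k, hkL⟩) v i))
                ≤ vnorm (fun i => (Real.sqrt L)⁻¹ * mulVec' (α ⟨k, hkL⟩) v i) := hmono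
              _ = |(Real.sqrt L)⁻¹| * vnorm (mulVec' (α ⟨k, hkL⟩) v) := vnorm_smul _ _
              _ ≤ (Real.sqrt L)⁻¹ * (cα * (Real.sqrt L)⁻¹ * vnorm v) := by
                  rw [abs_of_nonneg (by positivity)]
                  exact mul_le_mul_of_nonneg_left (hαv _ _) (by positivity)
              _ = t * vnorm v := by rw [← mul_assoc, hinv]
          calc vnorm (v + _) ≤ vnorm v + _ := vnorm_add_le _ _
            _ ≤ vnorm v + t * vnorm v := by linarith [hwb]
            _ = (1 + t) * vnorm v := by ring
        calc vnorm (mulVec' (jacM σ α x (k + 1)) (mulVec' (layerJac σ α x k hkL) v))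
            ≤ (1 + t) ^ n * vnorm (mulVec' (layerJac σ α x k hkL) v) := ih (k + 1) _ (by omega)
          _ ≤ (1 + t) ^ n * ((1 + t) * vnorm v) :=
            mul_le_mul_of_nonneg_left hlayer (by positivity)
          _ = (1 + t) ^ (n + 1) * vnorm v := by ring
      · rw [jacM, dif_neg hkL, mulVec_id]
        nlinarith [vnorm_nonneg v]
  -- numeric bounds
  have hexp_up : ∀ k : ℕ, k ≤ L → (1 + t) ^ k ≤ Real.exp cα := by
    intro k hk
    have h1 : (1 + t) ^ k ≤ Real.exp t ^ k :=
      pow_le_pow_left₀ (by linarith) (by linarith [Real.add_one_le_exp t]) k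
    rw [← Real.exp_nat_mul] at h1
    calc (1 + t) ^ k ≤ Real.exp (k * t) := h1
      _ ≤ Real.exp cα := by
        apply Real.exp_le_exp.2
        rw [← htL]
        have hk' : (k:ℝ) ≤ (L:ℝ) := by exact_mod_cast hk
        nlinarith [mul_le_mul_of_nonneg_left hk' (le_of_lt ht0)]
  have hexp_low : ∀ k : ℕ, k ≤ L → Real.exp (-(2 * cα)) ≤ (1 - t) ^ k := by
    intro k hk
    have hbase : Real.exp (-(2 * t)) ≤ 1 - t := by
      have h1 : 2 * t + 1 ≤ Real.exp (2 * t) := Real.add_one_le_exp _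
      have h2 : Real.exp (-(2 * t)) * Real.exp (2 * t) = 1 := by
        rw [← Real.exp_add]; simp
      have h3 : (0:ℝ) < Real.exp (-(2 * t)) := Real.exp_pos _
      nlinarith [mul_le_mul_of_nonneg_left h1 (le_of_lt h3)]
    have h1 : Real.exp (-(2 * t)) ^ k ≤ (1 - t) ^ k :=
      pow_le_pow_left₀ (le_of_lt (Real.exp_pos _)) hbase k
    rw [← Real.exp_nat_mul] at h1
    calc Real.exp (-(2 * cα)) ≤ Real.exp (k * -(2 * t)) := by
          apply Real.exp_le_exp.2
          have : (k : ℝ) * t ≤ cα := by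
            rw [← htL]
            have hk' : (k:ℝ) ≤ (L:ℝ) := by exact_mod_cast hk
            nlinarith [mul_le_mul_of_nonneg_left hk' (le_of_lt ht0)]
          nlinarith
      _ ≤ (1 - t) ^ k := h1
  intro k hk
  obtain ⟨hlow, hup⟩ := main k hk
  have hxn := vnorm_nonneg x
  refine ⟨⟨?_, ?_⟩, ?_⟩
  · calc vnorm x * Real.exp (-(2 * cα)) ≤ vnorm x * (1 - t) ^ k :=
        mul_le_mul_of_nonneg_left (hexp_low k hk) hxn
      _ ≤ vnorm (hiddenState σ α x k) := hlow
  · calc vnorm (hiddenState σ α x k) ≤ vnorm x * (1 + t) ^ k := hup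
      _ ≤ vnorm x * Real.exp cα := mul_le_mul_of_nonneg_left (hexp_up k hk) hxn
      _ ≤ vnorm x * Real.exp (1.1 * cα) := by
        apply mul_le_mul_of_nonneg_left _ hxn
        apply Real.exp_le_exp.2
        nlinarith
  · intro m
    have hcol : (fun i => jacM σ α x k i m)
        = mulVec' (jacM σ α x k) (fun j => if j = m then (1:ℝ) else 0) := by
      funext i
      simp [mulVec', mul_ite, Finset.sum_ite_eq']
    rw [hcol]
    calc vnorm (mulVec' (jacM σ α x k) (fun j => if j = m then (1:ℝ) else 0))
        ≤ (1 + t) ^ L * vnorm (fun j => if j = m then (1:ℝ) else 0) := jac L k _ (by omega)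
      _ = (1 + t) ^ L := by rw [vnorm_basis]; ring
      _ ≤ Real.exp cα := hexp_up L le_rfl
end
end

section
/- Upper bound on the layer-wise loss gradient (Lemma C.1): Let c_α > 0 and let the weights α satisfy L ≥ 5 c_α and ‖α‖_{F,∞} ≤ c_α L^{-1/2}. Under activation assumption (i) and with training data satisfying ‖x_i‖₂ = ‖y_i‖₂ = 1 for all i, for every k = 1, …, L one has ‖∇_{α_k} J_L(α)‖_F² ≤ 2 d e^{4.2 c_α} L^{-1} J_L(α). -/
open Finset

noncomputable section

/-! ### Auxiliary lemmas -/

section Aux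

variable {d L : ℕ} {σ : ℝ → ℝ}

theorem diff_hidden (hσ : Differentiable ℝ σ) (x : Fin d → ℝ) :
    ∀ k, ∀ i, Differentiable ℝ (fun α : Fin L → Fin d → Fin d → ℝ => hiddenState σ α x k i) := by
  intro k
  induction k with
  | zero => intro i; simpa [hiddenState] using differentiable_const (x i)
  | succ k ih =>
    intro i
    by_cases h : k < L
    · simp only [hiddenState, dif_pos h]
      refine (ih i).add (Differentiable.const_mul ?_ _)
      refine hσ.comp ?_
      unfold mulVec'
      exact Differentiable.fun_sum fun j _ => Differentiable.mul (by fun_prop) (ih j)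
    · simpa [hiddenState, dif_neg h] using ih i

/-- Directional derivative (in direction `e`) of the hidden states. -/
def dH (σ : ℝ → ℝ) (α e : Fin L → Fin d → Fin d → ℝ) (x : Fin d → ℝ) : ℕ → Fin d → ℝ
  | 0 => fun _ => 0
  | k + 1 =>
      if h : k < L then
        fun i => dH σ α e x k i + (Real.sqrt L)⁻¹ *
          (deriv σ (mulVec' (α ⟨k, h⟩) (hiddenState σ α x k) i) *
            (mulVec' (α ⟨k, h⟩) (dH σ α e x k) i + mulVec' (e ⟨k, h⟩) (hiddenState σ α x k) i))
      else dH σ α e x k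

theorem hasDerivAt_hidden (hσ : Differentiable ℝ σ)
    (α e : Fin L → Fin d → Fin d → ℝ) (x : Fin d → ℝ) :
    ∀ k i, HasDerivAt (fun t : ℝ => hiddenState σ (α + t • e) x k i) (dH σ α e x k i) 0 := by
  have key : α + (0:ℝ) • e = α := by simp
  intro k
  induction k with
  | zero => intro i; simpa [hiddenState, dH] using hasDerivAt_const (0:ℝ) (x i)
  | succ k ih =>
    intro i
    by_cases h : k < L
    · have hg : HasDerivAt
        (fun t : ℝ => mulVec' ((α + t • e) ⟨k, h⟩) (hiddenState σ (α + t • e) x k) i)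
        (mulVec' (α ⟨k, h⟩) (dH σ α e x k) i + mulVec' (e ⟨k, h⟩) (hiddenState σ α x k) i) 0 := by
        unfold mulVec'
        have hj : ∀ j : Fin d, HasDerivAt
            (fun t : ℝ => (α + t • e) ⟨k, h⟩ i j * hiddenState σ (α + t • e) x k j)
            (e ⟨k, h⟩ i j * hiddenState σ α x k j + α ⟨k, h⟩ i j * dH σ α e x k j) 0 := by
          intro j
          have h1 : HasDerivAt (fun t : ℝ => (α + t • e) ⟨k, h⟩ i j) (e ⟨k, h⟩ i j) 0 := by
            simpa [mul_comm] using
              ((hasDerivAt_id (0:ℝ)).const_mul (e ⟨k, h⟩ i j)).const_add (α ⟨k, h⟩ i j)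
          have := h1.fun_mul (ih j)
          simpa [key] using this
        have hsum := HasDerivAt.fun_sum (fun j (_ : j ∈ Finset.univ) => hj j)
        convert hsum using 1
        case e'_4 => rfl
        case e'_5 => rfl
        rw [Finset.sum_add_distrib, add_comm]
      have hσ' := (hσ (mulVec' ((α + (0:ℝ) • e) ⟨k, h⟩)
        (hiddenState σ (α + (0:ℝ) • e) x k) i)).hasDerivAt
      have hcomp := HasDerivAt.comp (0:ℝ) hσ' hg
      simp only [key, Function.comp_def] at hcomp
      have := (ih i).add (hcomp.const_mul ((Real.sqrt L)⁻¹))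
      simp only [hiddenState, dH, dif_pos h]
      exact this
    · simp only [hiddenState, dH, dif_neg h]
      exact ih i

theorem hasDerivAt_loss {N : ℕ} (hσ : Differentiable ℝ σ) (x y : Fin N → Fin d → ℝ)
    (α e : Fin L → Fin d → Fin d → ℝ) :
    HasDerivAt (fun t : ℝ => loss σ x y (α + t • e))
      ((1 / N) * ∑ i, ∑ j,
        (hiddenState σ α (x i) L j - y i j) * dH σ α e (x i) L j) 0 := by
  have key : α + (0:ℝ) • e = α := by simp
  have hterm : ∀ (i : Fin N) (j : Fin d), HasDerivAt
      (fun t : ℝ => (y i j - hiddenState σ (α + t • e) (x i) L j) ^ 2)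
      (2 * (y i j - hiddenState σ α (x i) L j) ^ 1 * (0 - dH σ α e (x i) L j)) 0 := by
    intro i j
    have := ((hasDerivAt_const (0:ℝ) (y i j)).fun_sub (hasDerivAt_hidden hσ α e (x i) L j)).fun_pow 2
    simpa [key] using this
  have total := HasDerivAt.const_mul (1 / (2 * (N:ℝ)))
    (HasDerivAt.fun_sum (fun i (_ : i ∈ Finset.univ) =>
      HasDerivAt.fun_sum (fun j (_ : j ∈ Finset.univ) => hterm i j)))
  have : (fun t : ℝ => loss σ x y (α + t • e)) =
      fun t : ℝ => 1 / (2 * (N:ℝ)) * ∑ i, ∑ j, (y i j - hiddenState σ (α + t • e) (x i) L j) ^ 2 := by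
    funext t; rfl
  rw [this]
  convert total using 1
  case e'_4 => rfl
  case e'_5 => rfl
  rw [Finset.mul_sum, Finset.mul_sum]
  refine Finset.sum_congr rfl fun i _ => ?_
  rw [Finset.mul_sum, Finset.mul_sum]
  refine Finset.sum_congr rfl fun j _ => ?_
  ring

theorem differentiable_loss {N : ℕ} (hσ : Differentiable ℝ σ) (x y : Fin N → Fin d → ℝ) :
    Differentiable ℝ (loss σ x y (L := L)) := by
  unfold loss
  refine Differentiable.const_mul ?_ _
  refine Differentiable.fun_sum fun i _ => Differentiable.fun_sum fun j _ => ?_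
  exact ((differentiable_const _).sub (diff_hidden hσ (x i) L j)).pow 2

theorem gradEntry_eq_line {N : ℕ} (hσ : Differentiable ℝ σ) (x y : Fin N → Fin d → ℝ)
    (α : Fin L → Fin d → Fin d → ℝ) (k : Fin L) (m n : Fin d) :
    gradEntry σ x y α k m n = (1 / N) * ∑ i, ∑ j,
      (hiddenState σ α (x i) L j - y i j) *
        dH σ α (Pi.single k (Pi.single m (Pi.single n 1))) (x i) L j := by
  have hdiff := (differentiable_loss hσ x y (L := L)) α
  rw [gradEntry, ← hdiff.lineDeriv_eq_fderiv, lineDeriv]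
  exact (hasDerivAt_loss hσ x y α _).deriv

end Aux
section Aux2

variable {d L : ℕ} {σ : ℝ → ℝ}

theorem dH_below (α : Fin L → Fin d → Fin d → ℝ) (x : Fin d → ℝ) (k : Fin L) (m n : Fin d) :
    ∀ j, j ≤ k.val → dH σ α (Pi.single k (Pi.single m (Pi.single n 1))) x j = fun _ => 0 := by
  intro j
  induction j with
  | zero => intro _; rfl
  | succ j ih =>
    intro hj
    have hjk : j < k.val := hj
    have h : j < L := lt_trans hjk k.isLt
    have he : (Pi.single k (Pi.single m (Pi.single n 1)) : Fin L → Fin d → Fin d → ℝ) ⟨j, h⟩ = 0 :=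
      Pi.single_eq_of_ne (by simp [Fin.ext_iff]; omega) _
    funext i
    simp [dH, dif_pos h, ih (le_of_lt hjk), he, mulVec']

theorem dH_succ (α : Fin L → Fin d → Fin d → ℝ) (x : Fin d → ℝ) (k : Fin L) (m n : Fin d) :
    dH σ α (Pi.single k (Pi.single m (Pi.single n 1))) x (k.val + 1) = fun i =>
      if i = m then (Real.sqrt L)⁻¹ *
        (deriv σ (mulVec' (α k) (hiddenState σ α x k.val) m) * hiddenState σ α x k.val n)
      else 0 := by
  have h : k.val < L := k.isLt
  have he : (Pi.single k (Pi.single m (Pi.single n 1)) : Fin L → Fin d → Fin d → ℝ) ⟨k.val, h⟩ =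
      Pi.single m (Pi.single n 1) := by
    have : (⟨k.val, h⟩ : Fin L) = k := by simp [Fin.ext_iff]
    rw [this]; exact Pi.single_eq_same _ _
  funext i
  have hzero := dH_below (σ := σ) α x k m n k.val le_rfl
  by_cases him : i = m
  · subst him
    simp [dH, dif_pos h, hzero, he, mulVec', Pi.single_apply, ite_mul,
      Finset.sum_ite_eq, Fin.eta]
  · simp [dH, dif_pos h, hzero, he, mulVec', Pi.single_apply, ite_mul,
      Finset.sum_ite_eq, him]

theorem dH_step (α : Fin L → Fin d → Fin d → ℝ) (x : Fin d → ℝ) (k : Fin L) (m n : Fin d)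
    (k' : ℕ) (h : k' < L) (hne : k' ≠ k.val) (i : Fin d) :
    dH σ α (Pi.single k (Pi.single m (Pi.single n 1))) x (k' + 1) i =
      ∑ l, layerJac σ α x k' h i l * dH σ α (Pi.single k (Pi.single m (Pi.single n 1))) x k' l := by
  have he : (Pi.single k (Pi.single m (Pi.single n 1)) : Fin L → Fin d → Fin d → ℝ) ⟨k', h⟩ = 0 :=
    Pi.single_eq_of_ne (by simp [Fin.ext_iff]; omega) _
  simp only [dH, dif_pos h, he, layerJac, mulVec']
  simp only [add_mul, ite_mul, one_mul, zero_mul, Finset.sum_add_distrib, Finset.sum_ite_eq,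
    Finset.mem_univ, if_true]
  simp [Finset.mul_sum, mul_assoc, mul_comm, mul_left_comm]

theorem Gvec_rec (α : Fin L → Fin d → Fin d → ℝ) (x y : Fin d → ℝ) (k' : ℕ) (h : k' < L)
    (n' : Fin d) :
    Gvec σ α x y k' n' = ∑ l, layerJac σ α x k' h l n' * Gvec σ α x y (k' + 1) l := by
  rw [Gvec]
  conv_lhs => rw [jacM]
  simp only [dif_pos h, matMul']
  simp only [Gvec, Finset.sum_mul, Finset.mul_sum]
  rw [Finset.sum_comm]
  exact Finset.sum_congr rfl fun l _ => Finset.sum_congr rfl fun j _ => by ring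

theorem Gvec_top (α : Fin L → Fin d → Fin d → ℝ) (x y : Fin d → ℝ) (n' : Fin d) :
    Gvec σ α x y L n' = hiddenState σ α x L n' - y n' := by
  rw [Gvec]
  conv_lhs => rw [jacM]
  simp [ite_mul, Finset.sum_ite_eq]

theorem S_inv (α : Fin L → Fin d → Fin d → ℝ) (x y : Fin d → ℝ) (k : Fin L) (m n : Fin d)
    (k' : ℕ) (h : k' < L) (hne : k' ≠ k.val) :
    ∑ n', Gvec σ α x y k' n' * dH σ α (Pi.single k (Pi.single m (Pi.single n 1))) x k' n' =
    ∑ n', Gvec σ α x y (k' + 1) n' *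
      dH σ α (Pi.single k (Pi.single m (Pi.single n 1))) x (k' + 1) n' := by
  calc ∑ n', Gvec σ α x y k' n' * dH σ α (Pi.single k (Pi.single m (Pi.single n 1))) x k' n'
      = ∑ n', ∑ l, layerJac σ α x k' h l n' * Gvec σ α x y (k' + 1) l *
          dH σ α (Pi.single k (Pi.single m (Pi.single n 1))) x k' n' := by
        refine Finset.sum_congr rfl fun n' _ => ?_
        rw [Gvec_rec α x y k' h n', Finset.sum_mul]
    _ = ∑ l, Gvec σ α x y (k' + 1) l * ∑ n', layerJac σ α x k' h l n' *
          dH σ α (Pi.single k (Pi.single m (Pi.single n 1))) x k' n' := by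
        rw [Finset.sum_comm]
        refine Finset.sum_congr rfl fun l _ => ?_
        rw [Finset.mul_sum]
        exact Finset.sum_congr rfl fun n' _ => by ring
    _ = ∑ n', Gvec σ α x y (k' + 1) n' *
          dH σ α (Pi.single k (Pi.single m (Pi.single n 1))) x (k' + 1) n' := by
        refine Finset.sum_congr rfl fun l _ => ?_
        rw [dH_step α x k m n k' h hne l]

theorem key_sum (α : Fin L → Fin d → Fin d → ℝ) (x y : Fin d → ℝ) (k : Fin L) (m n : Fin d) :
    ∑ j, (hiddenState σ α x L j - y j) *
        dH σ α (Pi.single k (Pi.single m (Pi.single n 1))) x L j =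
      Gvec σ α x y (k.val + 1) m * ((Real.sqrt L)⁻¹ *
        (deriv σ (mulVec' (α k) (hiddenState σ α x k.val) m) * hiddenState σ α x k.val n)) := by
  have chain : ∀ j : ℕ, k.val + 1 + j ≤ L →
      ∑ n', Gvec σ α x y (k.val + 1 + j) n' *
        dH σ α (Pi.single k (Pi.single m (Pi.single n 1))) x (k.val + 1 + j) n' =
      ∑ n', Gvec σ α x y (k.val + 1) n' *
        dH σ α (Pi.single k (Pi.single m (Pi.single n 1))) x (k.val + 1) n' := by
    intro j
    induction j with
    | zero => intro _; rfl
    | succ j ih =>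
      intro hj
      have h1 : k.val + 1 + j < L := by omega
      have := S_inv (σ := σ) α x y k m n (k.val + 1 + j) h1 (by omega)
      rw [show k.val + 1 + (j + 1) = (k.val + 1 + j) + 1 from rfl, ← this, ih (by omega)]
  have hL' : k.val + 1 + (L - (k.val + 1)) = L := by omega
  have main := chain (L - (k.val + 1)) (by omega)
  rw [hL'] at main
  calc ∑ j, (hiddenState σ α x L j - y j) *
        dH σ α (Pi.single k (Pi.single m (Pi.single n 1))) x L j
      = ∑ n', Gvec σ α x y L n' *
        dH σ α (Pi.single k (Pi.single m (Pi.single n 1))) x L n' := by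
        exact Finset.sum_congr rfl fun j _ => by rw [Gvec_top]
    _ = ∑ n', Gvec σ α x y (k.val + 1) n' *
        dH σ α (Pi.single k (Pi.single m (Pi.single n 1))) x (k.val + 1) n' := main
    _ = _ := by
        rw [dH_succ]
        simp only [mul_ite, mul_zero, Finset.sum_ite_eq', Finset.mem_univ, if_true]

end Aux2
section Aux3

variable {d L : ℕ} {σ : ℝ → ℝ}

theorem step_bound {U V X P c : ℝ} (hP : 0 ≤ P) (hc : 0 ≤ c) (hU : U ≤ P)
    (hV : V ≤ c ^ 2 * P) (hX : X ^ 2 ≤ U * V) (hU0 : 0 ≤ U) (hV0 : 0 ≤ V) :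
    U + 2 * X + V ≤ (1 + c) ^ 2 * P := by
  have h2 : U * V ≤ (c * P) ^ 2 := by nlinarith
  have hXle : X ≤ c * P := by
    by_contra hcon
    push_neg at hcon
    have h3 : 0 < X - c * P := by linarith
    have h4 : 0 < X + c * P := by nlinarith [mul_nonneg hc hP]
    nlinarith [mul_pos h3 h4]
  nlinarith

theorem sum_sq_expand {u v : Fin d → ℝ} :
    ∑ i, (u i + v i) ^ 2 = (∑ i, u i ^ 2) + 2 * (∑ i, u i * v i) + ∑ i, v i ^ 2 := by
  rw [Finset.mul_sum, ← Finset.sum_add_distrib, ← Finset.sum_add_distrib]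
  exact Finset.sum_congr rfl fun i _ => by ring

theorem row_cs (A : Fin d → Fin d → ℝ) (v : Fin d → ℝ) :
    ∑ i, (mulVec' A v i) ^ 2 ≤ (∑ i, ∑ j, A i j ^ 2) * ∑ j, v j ^ 2 := by
  rw [Finset.sum_mul]
  refine Finset.sum_le_sum fun i _ => ?_
  exact Finset.sum_mul_sq_le_sq_mul_sq Finset.univ (A i) v

theorem col_cs (A : Fin d → Fin d → ℝ) (g : Fin d → ℝ) :
    ∑ n, (∑ l, g l * A l n) ^ 2 ≤ (∑ l, ∑ n, A l n ^ 2) * ∑ l, g l ^ 2 := by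
  have h1 : ∀ n : Fin d, (∑ l, g l * A l n) ^ 2 ≤ (∑ l, A l n ^ 2) * ∑ l, g l ^ 2 := by
    intro n
    have := Finset.sum_mul_sq_le_sq_mul_sq Finset.univ (fun l => A l n) g
    calc (∑ l, g l * A l n) ^ 2 = (∑ l, A l n * g l) ^ 2 := by
          rw [Finset.sum_congr rfl fun l _ => mul_comm (g l) (A l n)]
      _ ≤ _ := this
  calc ∑ n, (∑ l, g l * A l n) ^ 2 ≤ ∑ n, (∑ l, A l n ^ 2) * ∑ l, g l ^ 2 :=
        Finset.sum_le_sum fun n _ => h1 n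
    _ = (∑ l, ∑ n, A l n ^ 2) * ∑ l, g l ^ 2 := by rw [← Finset.sum_mul, Finset.sum_comm]

theorem frob_sq {cα : ℝ} (hcα : 0 ≤ cα) {A : Fin d → Fin d → ℝ}
    (hA : frobNorm A ≤ cα * (Real.sqrt L)⁻¹) (hL : 1 ≤ L) :
    ∑ i, ∑ j, A i j ^ 2 ≤ cα ^ 2 / L := by
  have hS : (0:ℝ) ≤ ∑ i, ∑ j, A i j ^ 2 :=
    Finset.sum_nonneg fun i _ => Finset.sum_nonneg fun j _ => sq_nonneg _
  have h1 : (Real.sqrt (∑ i, ∑ j, A i j ^ 2)) ^ 2 ≤ (cα * (Real.sqrt L)⁻¹) ^ 2 := by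
    exact pow_le_pow_left₀ (Real.sqrt_nonneg _) hA 2
  rw [Real.sq_sqrt hS] at h1
  have hL0 : (0:ℝ) < L := by positivity
  calc ∑ i, ∑ j, A i j ^ 2 ≤ (cα * (Real.sqrt L)⁻¹) ^ 2 := h1
    _ = cα ^ 2 * ((Real.sqrt L) ^ 2)⁻¹ := by ring
    _ = cα ^ 2 / L := by rw [Real.sq_sqrt hL0.le]; ring

theorem inv_sqrt_sq (hL : 1 ≤ L) : ((Real.sqrt L)⁻¹ : ℝ) ^ 2 = (L : ℝ)⁻¹ := by
  have hL0 : (0:ℝ) ≤ L := by positivity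
  rw [inv_pow, Real.sq_sqrt hL0]

end Aux3
section Aux4

variable {d L : ℕ} {σ : ℝ → ℝ}

theorem Gvec_rec' (α : Fin L → Fin d → Fin d → ℝ) (x y : Fin d → ℝ) (k' : ℕ) (h : k' < L)
    (n' : Fin d) :
    Gvec σ α x y k' n' = Gvec σ α x y (k' + 1) n' + (Real.sqrt L)⁻¹ *
      ∑ l, deriv σ (mulVec' (α ⟨k', h⟩) (hiddenState σ α x k') l) * α ⟨k', h⟩ l n' *
        Gvec σ α x y (k' + 1) l := by
  rw [Gvec_rec α x y k' h n']
  have hterm : ∀ l : Fin d, layerJac σ α x k' h l n' * Gvec σ α x y (k' + 1) l =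
      (if l = n' then Gvec σ α x y (k' + 1) l else 0) +
      (Real.sqrt L)⁻¹ * (deriv σ (mulVec' (α ⟨k', h⟩) (hiddenState σ α x k') l) *
        (α ⟨k', h⟩ l n' * Gvec σ α x y (k' + 1) l)) := by
    intro l
    simp only [layerJac]
    split_ifs <;> ring
  rw [Finset.sum_congr rfl (fun l _ => hterm l), Finset.sum_add_distrib,
    Finset.sum_ite_eq' Finset.univ n' (fun l => Gvec σ α x y (k' + 1) l)]
  simp only [Finset.mem_univ, if_true]
  rw [Finset.mul_sum]
  congr 1
  exact Finset.sum_congr rfl fun l _ => by ring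

theorem hidden_growth (hσ1 : ∀ z, |σ z| ≤ |z|) {cα : ℝ} (hc : 0 ≤ cα) (hL : 1 ≤ L)
    (α : Fin L → Fin d → Fin d → ℝ)
    (hα : ∀ k', ∑ i, ∑ j, α k' i j ^ 2 ≤ cα ^ 2 / L)
    (x : Fin d → ℝ) (hx : ∑ i, x i ^ 2 = 1) :
    ∀ k', ∑ i, hiddenState σ α x k' i ^ 2 ≤ ((1 + cα / L) ^ k') ^ 2 := by
  have hLpos : (0:ℝ) < L := by positivity
  have hbase : (1:ℝ) ≤ 1 + cα / L := by
    have : (0:ℝ) ≤ cα / L := by positivity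
    linarith
  intro k'
  induction k' with
  | zero => simp [hiddenState, hx]
  | succ k' ih =>
    by_cases h : k' < L
    · set H := hiddenState σ α x k' with hH
      set u := mulVec' (α ⟨k', h⟩) H with hu
      set r := fun i => (Real.sqrt L)⁻¹ * σ (u i) with hr
      have hstep : ∀ i, hiddenState σ α x (k' + 1) i = H i + r i := by
        intro i; simp [hiddenState, dif_pos h, hH, hu, hr]
      have hU0 : (0:ℝ) ≤ ∑ i, H i ^ 2 := Finset.sum_nonneg fun i _ => sq_nonneg _
      have hP0 : (0:ℝ) ≤ ((1 + cα / L) ^ k') ^ 2 := sq_nonneg _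
      have hu2 : ∑ i, u i ^ 2 ≤ cα ^ 2 / L * ∑ i, H i ^ 2 := by
        calc ∑ i, u i ^ 2 ≤ (∑ i, ∑ j, α ⟨k', h⟩ i j ^ 2) * ∑ i, H i ^ 2 := row_cs _ _
          _ ≤ cα ^ 2 / L * ∑ i, H i ^ 2 :=
            mul_le_mul_of_nonneg_right (hα _) hU0
      have hV : ∑ i, r i ^ 2 ≤ (cα / L) ^ 2 * ((1 + cα / L) ^ k') ^ 2 := by
        have h1 : ∑ i, r i ^ 2 ≤ (L:ℝ)⁻¹ * ∑ i, u i ^ 2 := by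
          rw [Finset.mul_sum]
          refine Finset.sum_le_sum fun i _ => ?_
          have hs : σ (u i) ^ 2 ≤ u i ^ 2 := by
            rw [← sq_abs (σ (u i)), ← sq_abs (u i)]
            exact pow_le_pow_left₀ (abs_nonneg _) (hσ1 (u i)) 2
          calc r i ^ 2 = (Real.sqrt L)⁻¹ ^ 2 * σ (u i) ^ 2 := by rw [hr]; ring
            _ = (L:ℝ)⁻¹ * σ (u i) ^ 2 := by rw [inv_sqrt_sq hL]
            _ ≤ (L:ℝ)⁻¹ * u i ^ 2 := by
                exact mul_le_mul_of_nonneg_left hs (by positivity)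
        calc ∑ i, r i ^ 2 ≤ (L:ℝ)⁻¹ * ∑ i, u i ^ 2 := h1
          _ ≤ (L:ℝ)⁻¹ * (cα ^ 2 / L * ∑ i, H i ^ 2) :=
              mul_le_mul_of_nonneg_left hu2 (by positivity)
          _ = cα ^ 2 / L ^ 2 * ∑ i, H i ^ 2 := by ring
          _ ≤ cα ^ 2 / L ^ 2 * ((1 + cα / L) ^ k') ^ 2 :=
              mul_le_mul_of_nonneg_left ih (by positivity)
          _ = (cα / L) ^ 2 * ((1 + cα / L) ^ k') ^ 2 := by ring
      have hX : (∑ i, H i * r i) ^ 2 ≤ (∑ i, H i ^ 2) * ∑ i, r i ^ 2 :=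
        Finset.sum_mul_sq_le_sq_mul_sq Finset.univ H r
      have hmain := step_bound hP0 (by positivity : (0:ℝ) ≤ cα / L) ih hV hX hU0
        (Finset.sum_nonneg fun i _ => sq_nonneg _)
      calc ∑ i, hiddenState σ α x (k' + 1) i ^ 2 = ∑ i, (H i + r i) ^ 2 :=
            Finset.sum_congr rfl fun i _ => by rw [hstep]
        _ = (∑ i, H i ^ 2) + 2 * (∑ i, H i * r i) + ∑ i, r i ^ 2 := sum_sq_expand
        _ ≤ (1 + cα / L) ^ 2 * ((1 + cα / L) ^ k') ^ 2 := hmain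
        _ = ((1 + cα / L) ^ (k' + 1)) ^ 2 := by ring
    · have heq : hiddenState σ α x (k' + 1) = hiddenState σ α x k' := by
        simp [hiddenState, dif_neg h]
      rw [heq]
      calc ∑ i, hiddenState σ α x k' i ^ 2 ≤ ((1 + cα / L) ^ k') ^ 2 := ih
        _ ≤ ((1 + cα / L) ^ (k' + 1)) ^ 2 := by
            have : (1 + cα / L) ^ k' ≤ (1 + cα / L) ^ (k' + 1) :=
              pow_le_pow_right₀ hbase (Nat.le_succ _)
            exact pow_le_pow_left₀ (by positivity) this 2

theorem gvec_decay (hσ1 : ∀ z, |deriv σ z| ≤ 1) {cα : ℝ} (hc : 0 ≤ cα) (hL : 1 ≤ L)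
    (α : Fin L → Fin d → Fin d → ℝ)
    (hα : ∀ k', ∑ i, ∑ j, α k' i j ^ 2 ≤ cα ^ 2 / L)
    (x y : Fin d → ℝ) :
    ∀ j, j ≤ L → ∑ n, Gvec σ α x y (L - j) n ^ 2 ≤
      ((1 + cα / L) ^ j) ^ 2 * ∑ i, (hiddenState σ α x L i - y i) ^ 2 := by
  have hLpos : (0:ℝ) < L := by positivity
  set W := ∑ i, (hiddenState σ α x L i - y i) ^ 2 with hW
  have hW0 : 0 ≤ W := Finset.sum_nonneg fun i _ => sq_nonneg _
  intro j
  induction j with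
  | zero =>
    intro _
    simp only [Nat.sub_zero, pow_zero, one_pow, one_mul]
    exact le_of_eq (Finset.sum_congr rfl fun n _ => by rw [Gvec_top])
  | succ j ih =>
    intro hj
    have h : L - (j + 1) < L := by omega
    have hsucc : L - (j + 1) + 1 = L - j := by omega
    set k' := L - (j + 1) with hk'
    set G' := Gvec σ α x y (k' + 1) with hG'
    set D := fun l => deriv σ (mulVec' (α ⟨k', h⟩) (hiddenState σ α x k') l) with hD
    set s := fun n => (Real.sqrt L)⁻¹ * ∑ l, D l * α ⟨k', h⟩ l n * G' l with hs
    have hstep : ∀ n, Gvec σ α x y k' n = G' n + s n := fun n => Gvec_rec' α x y k' h n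
    have ihG : ∑ n, G' n ^ 2 ≤ ((1 + cα / L) ^ j) ^ 2 * W := by
      rw [hG', hsucc]; exact ih (by omega)
    have hU0 : (0:ℝ) ≤ ∑ n, G' n ^ 2 := Finset.sum_nonneg fun n _ => sq_nonneg _
    have hP0 : (0:ℝ) ≤ ((1 + cα / L) ^ j) ^ 2 * W := by positivity
    have hDG : ∑ l, (D l * G' l) ^ 2 ≤ ∑ l, G' l ^ 2 := by
      refine Finset.sum_le_sum fun l _ => ?_
      have h1 : D l ^ 2 ≤ 1 := by
        rw [← sq_abs (D l)]
        calc |D l| ^ 2 ≤ 1 ^ 2 := pow_le_pow_left₀ (abs_nonneg _) (hσ1 _) 2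
          _ = 1 := one_pow 2
      calc (D l * G' l) ^ 2 = D l ^ 2 * G' l ^ 2 := by ring
        _ ≤ 1 * G' l ^ 2 := mul_le_mul_of_nonneg_right h1 (sq_nonneg _)
        _ = G' l ^ 2 := one_mul _
    have hV : ∑ n, s n ^ 2 ≤ (cα / L) ^ 2 * (((1 + cα / L) ^ j) ^ 2 * W) := by
      have h1 : ∑ n, s n ^ 2 ≤ (L:ℝ)⁻¹ * ((∑ l, ∑ n, α ⟨k', h⟩ l n ^ 2) * ∑ l, (D l * G' l) ^ 2) := by
        have h2 := col_cs (fun l n => α ⟨k', h⟩ l n) (fun l => D l * G' l)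
        have h3 : ∀ n, s n ^ 2 = (L:ℝ)⁻¹ * (∑ l, (D l * G' l) * α ⟨k', h⟩ l n) ^ 2 := by
          intro n
          rw [hs]
          rw [mul_pow, inv_sqrt_sq hL]
          congr 2
          exact Finset.sum_congr rfl fun l _ => by ring
        calc ∑ n, s n ^ 2 = (L:ℝ)⁻¹ * ∑ n, (∑ l, (D l * G' l) * α ⟨k', h⟩ l n) ^ 2 := by
              rw [Finset.mul_sum]; exact Finset.sum_congr rfl fun n _ => h3 n
          _ ≤ _ := mul_le_mul_of_nonneg_left h2 (by positivity)
      calc ∑ n, s n ^ 2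
          ≤ (L:ℝ)⁻¹ * ((∑ l, ∑ n, α ⟨k', h⟩ l n ^ 2) * ∑ l, (D l * G' l) ^ 2) := h1
        _ ≤ (L:ℝ)⁻¹ * (cα ^ 2 / L * ∑ l, (D l * G' l) ^ 2) := by
            refine mul_le_mul_of_nonneg_left ?_ (by positivity)
            exact mul_le_mul_of_nonneg_right (hα _)
              (Finset.sum_nonneg fun l _ => sq_nonneg _)
        _ ≤ (L:ℝ)⁻¹ * (cα ^ 2 / L * ∑ l, G' l ^ 2) := by
            refine mul_le_mul_of_nonneg_left (mul_le_mul_of_nonneg_left hDG (by positivity))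
              (by positivity)
        _ = cα ^ 2 / L ^ 2 * ∑ l, G' l ^ 2 := by ring
        _ ≤ cα ^ 2 / L ^ 2 * (((1 + cα / L) ^ j) ^ 2 * W) :=
            mul_le_mul_of_nonneg_left ihG (by positivity)
        _ = (cα / L) ^ 2 * (((1 + cα / L) ^ j) ^ 2 * W) := by ring
    have hX : (∑ n, G' n * s n) ^ 2 ≤ (∑ n, G' n ^ 2) * ∑ n, s n ^ 2 :=
      Finset.sum_mul_sq_le_sq_mul_sq Finset.univ G' s
    have hmain := step_bound hP0 (by positivity : (0:ℝ) ≤ cα / L) ihG hV hX hU0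
      (Finset.sum_nonneg fun n _ => sq_nonneg _)
    calc ∑ n, Gvec σ α x y (L - (j + 1)) n ^ 2 = ∑ n, (G' n + s n) ^ 2 :=
          Finset.sum_congr rfl fun n _ => by rw [← hk', hstep]
      _ = (∑ n, G' n ^ 2) + 2 * (∑ n, G' n * s n) + ∑ n, s n ^ 2 := sum_sq_expand
      _ ≤ (1 + cα / L) ^ 2 * (((1 + cα / L) ^ j) ^ 2 * W) := hmain
      _ = ((1 + cα / L) ^ (j + 1)) ^ 2 * W := by ring

theorem pow_sq_le_exp {L : ℕ} {cα : ℝ} (hc : 0 ≤ cα) (hL : 1 ≤ L) {j : ℕ} (hj : j ≤ L) :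
    (((1 + cα / L) ^ j : ℝ)) ^ 2 ≤ Real.exp (2 * cα) := by
  have hLpos : (0:ℝ) < L := by positivity
  have h1 : (1 : ℝ) + cα / L ≤ Real.exp (cα / L) := by
    have := Real.add_one_le_exp (cα / L); linarith
  have h2 : ((1 : ℝ) + cα / L) ^ j ≤ Real.exp (cα / L) ^ j :=
    pow_le_pow_left₀ (by positivity) h1 j
  have h3 : Real.exp (cα / L) ^ j = Real.exp (j * (cα / L)) := by
    rw [← Real.exp_nat_mul]
  have h4 : (((1 : ℝ) + cα / L) ^ j) ^ 2 ≤ Real.exp ((j:ℝ) * (cα / L)) ^ 2 := by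
    rw [← h3]; exact pow_le_pow_left₀ (by positivity) h2 2
  have h5 : Real.exp ((j:ℝ) * (cα / L)) ^ 2 = Real.exp (2 * ((j:ℝ) * (cα / L))) := by
    rw [← Real.exp_nat_mul]; norm_num
  have h6 : 2 * ((j:ℝ) * (cα / L)) ≤ 2 * cα := by
    have hjL : (j:ℝ) ≤ L := by exact_mod_cast hj
    have : (j:ℝ) * (cα / L) ≤ (L:ℝ) * (cα / L) :=
      mul_le_mul_of_nonneg_right hjL (by positivity)
    have heq : (L:ℝ) * (cα / L) = cα := by field_simp
    linarith [this, heq ▸ this]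
  calc (((1 : ℝ) + cα / L) ^ j) ^ 2 ≤ Real.exp (2 * ((j:ℝ) * (cα / L))) := by rw [← h5]; exact h4
    _ ≤ Real.exp (2 * cα) := Real.exp_le_exp.mpr h6

end Aux4
section Aux5

variable {d L : ℕ} {σ : ℝ → ℝ}

theorem avg_sq {N : ℕ} (hN : 1 ≤ N) (a : Fin N → ℝ) :
    (1 / (N:ℝ) * ∑ i, a i) ^ 2 ≤ 1 / (N:ℝ) * ∑ i, a i ^ 2 := by
  have hNpos : (0:ℝ) < N := by positivity
  have h := Finset.sum_mul_sq_le_sq_mul_sq Finset.univ (fun _ : Fin N => (1:ℝ)) a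
  simp only [one_mul, one_pow, Finset.sum_const, Finset.card_univ, Fintype.card_fin,
    nsmul_eq_mul, mul_one] at h
  have h2 : (1 / (N:ℝ) * ∑ i, a i) ^ 2 = (1 / (N:ℝ)) ^ 2 * (∑ i, a i) ^ 2 := by ring
  rw [h2]
  calc (1 / (N:ℝ)) ^ 2 * (∑ i, a i) ^ 2 ≤ (1 / (N:ℝ)) ^ 2 * ((N:ℝ) * ∑ i, a i ^ 2) :=
        mul_le_mul_of_nonneg_left h (by positivity)
    _ = 1 / (N:ℝ) * ∑ i, a i ^ 2 := by field_simp

theorem per_sample (hσ : ActAssump σ) {cα : ℝ} (hcα : 0 < cα) (hL : 1 ≤ L)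
    (α : Fin L → Fin d → Fin d → ℝ)
    (hαsq : ∀ k', ∑ i, ∑ j, α k' i j ^ 2 ≤ cα ^ 2 / L)
    (x y : Fin d → ℝ) (hx : ∑ i, x i ^ 2 = 1) (k : Fin L) :
    ∑ m, ∑ n, (Gvec σ α x y (k.val + 1) m * ((Real.sqrt L)⁻¹ *
        (deriv σ (mulVec' (α k) (hiddenState σ α x k.val) m) *
          hiddenState σ α x k.val n))) ^ 2
      ≤ (L:ℝ)⁻¹ * Real.exp (4 * cα) * ∑ i, (hiddenState σ α x L i - y i) ^ 2 := by
  set W := ∑ i, (hiddenState σ α x L i - y i) ^ 2 with hW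
  have hW0 : 0 ≤ W := Finset.sum_nonneg fun i _ => sq_nonneg _
  set G := Gvec σ α x y (k.val + 1) with hG
  set D := fun m => deriv σ (mulVec' (α k) (hiddenState σ α x k.val) m) with hD
  set H := hiddenState σ α x k.val with hH
  -- hidden state bound
  have hHb : ∑ n, H n ^ 2 ≤ Real.exp (2 * cα) := by
    calc ∑ n, H n ^ 2 ≤ ((1 + cα / L) ^ k.val) ^ 2 :=
          hidden_growth (fun z => (hσ.2.2 z).1) hcα.le hL α hαsq x hx k.val
      _ ≤ Real.exp (2 * cα) := pow_sq_le_exp hcα.le hL k.isLt.le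
  -- Gvec bound
  have hGb : ∑ m, G m ^ 2 ≤ Real.exp (2 * cα) * W := by
    have hkL : k.val + 1 ≤ L := k.isLt
    have hsub : L - (L - (k.val + 1)) = k.val + 1 := by omega
    have := gvec_decay (fun z => (hσ.2.2 z).2.1) hcα.le hL α hαsq x y
      (L - (k.val + 1)) (by omega)
    rw [hsub] at this
    calc ∑ m, G m ^ 2 ≤ ((1 + cα / L) ^ (L - (k.val + 1))) ^ 2 * W := this
      _ ≤ Real.exp (2 * cα) * W :=
          mul_le_mul_of_nonneg_right (pow_sq_le_exp hcα.le hL (by omega)) hW0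
  have hDG : ∑ m, (G m * D m) ^ 2 ≤ Real.exp (2 * cα) * W := by
    refine le_trans (Finset.sum_le_sum fun m _ => ?_) hGb
    have h1 : D m ^ 2 ≤ 1 := by
      rw [← sq_abs (D m)]
      calc |D m| ^ 2 ≤ 1 ^ 2 := pow_le_pow_left₀ (abs_nonneg _) ((hσ.2.2 _).2.1) 2
        _ = 1 := one_pow 2
    nlinarith [sq_nonneg (G m)]
  have hsplit : ∀ m n : Fin d, (G m * ((Real.sqrt L)⁻¹ * (D m * H n))) ^ 2 =
      (L:ℝ)⁻¹ * ((G m * D m) ^ 2 * H n ^ 2) := by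
    intro m n
    have : (G m * ((Real.sqrt L)⁻¹ * (D m * H n))) ^ 2 =
        (Real.sqrt L)⁻¹ ^ 2 * ((G m * D m) ^ 2 * H n ^ 2) := by ring
    rw [this, inv_sqrt_sq hL]
  calc ∑ m, ∑ n, (G m * ((Real.sqrt L)⁻¹ * (D m * H n))) ^ 2
      = ∑ m, ((L:ℝ)⁻¹ * (G m * D m) ^ 2) * ∑ n, H n ^ 2 := by
        refine Finset.sum_congr rfl fun m _ => ?_
        rw [Finset.mul_sum]
        exact Finset.sum_congr rfl fun n _ => by rw [hsplit m n]; ring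
    _ = (L:ℝ)⁻¹ * ((∑ m, (G m * D m) ^ 2) * ∑ n, H n ^ 2) := by
        rw [← Finset.sum_mul, ← Finset.mul_sum]; ring
    _ ≤ (L:ℝ)⁻¹ * ((Real.exp (2 * cα) * W) * Real.exp (2 * cα)) := by
        refine mul_le_mul_of_nonneg_left ?_ (by positivity)
        refine mul_le_mul hDG hHb (Finset.sum_nonneg fun n _ => sq_nonneg _) (by positivity)
    _ = (L:ℝ)⁻¹ * Real.exp (4 * cα) * W := by
        rw [show Real.exp (2 * cα) * W * Real.exp (2 * cα) =
          (Real.exp (2 * cα) * Real.exp (2 * cα)) * W by ring, ← Real.exp_add]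
        ring_nf

end Aux5
/-- **Upper bound on the layer-wise loss gradient (Lemma C.1).** -/
theorem statement3 {d L N : ℕ} (hd : 1 ≤ d) (hL : 1 ≤ L) (hN : 1 ≤ N)
    {σ : ℝ → ℝ} (hσ : ActAssump σ)
    (cα : ℝ) (hcα : 0 < cα) (hLα : 5 * cα ≤ (L : ℝ))
    (x y : Fin N → Fin d → ℝ)
    (hx : ∀ i, vnorm (x i) = 1) (hy : ∀ i, vnorm (y i) = 1)
    (α : Fin L → Fin d → Fin d → ℝ)
    (hα : ∀ k, frobNorm (α k) ≤ cα * (Real.sqrt L)⁻¹) (k : Fin L) :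
    ∑ m, ∑ n, gradEntry σ x y α k m n ^ 2
      ≤ 2 * d * Real.exp (4.2 * cα) * (L : ℝ)⁻¹ * loss σ x y α := by
  have hσdiff : Differentiable ℝ σ := hσ.1.differentiable (by norm_num)
  have hαsq : ∀ k', ∑ i, ∑ j, α k' i j ^ 2 ≤ cα ^ 2 / L := fun k' => frob_sq hcα.le (hα k') hL
  have hxsq : ∀ i0 : Fin N, ∑ i, x i0 i ^ 2 = 1 := by
    intro i0
    have h1 : Real.sqrt (∑ i, x i0 i ^ 2) = 1 := hx i0
    have hS0 : (0:ℝ) ≤ ∑ i, x i0 i ^ 2 := Finset.sum_nonneg fun i _ => sq_nonneg _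
    calc ∑ i, x i0 i ^ 2 = Real.sqrt (∑ i, x i0 i ^ 2) ^ 2 := (Real.sq_sqrt hS0).symm
      _ = 1 := by rw [h1]; norm_num
  set W : Fin N → ℝ := fun i0 => ∑ jj, (hiddenState σ α (x i0) L jj - y i0 jj) ^ 2 with hWdef
  set F : Fin N → Fin d → Fin d → ℝ := fun i0 m n =>
    Gvec σ α (x i0) (y i0) (k.val + 1) m * ((Real.sqrt L)⁻¹ *
      (deriv σ (mulVec' (α k) (hiddenState σ α (x i0) k.val) m) *
        hiddenState σ α (x i0) k.val n)) with hFdef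
  have hgrad : ∀ m n : Fin d, gradEntry σ x y α k m n = 1 / (N:ℝ) * ∑ i0, F i0 m n := by
    intro m n
    rw [gradEntry_eq_line hσdiff]
    congr 1
    exact Finset.sum_congr rfl fun i0 _ => key_sum α (x i0) (y i0) k m n
  have hWl : loss σ x y α = 1 / (2 * (N:ℝ)) * ∑ i0, W i0 := by
    rw [loss]
    congr 1
    exact Finset.sum_congr rfl fun i0 _ => Finset.sum_congr rfl fun j _ => by ring
  have hNne : (N:ℝ) ≠ 0 := by positivity
  have h2loss : 1 / (N:ℝ) * ∑ i0, W i0 = 2 * loss σ x y α := by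
    rw [hWl]; field_simp
  have hloss0 : 0 ≤ loss σ x y α := by
    rw [hWl]
    have : ∀ i0 : Fin N, 0 ≤ W i0 := fun i0 => Finset.sum_nonneg fun j _ => sq_nonneg _
    have h2 : 0 ≤ ∑ i0, W i0 := Finset.sum_nonneg fun i0 _ => this i0
    positivity
  have hexp : Real.exp (4 * cα) ≤ (d:ℝ) * Real.exp (4.2 * cα) := by
    calc Real.exp (4 * cα) ≤ Real.exp (4.2 * cα) := Real.exp_le_exp.mpr (by nlinarith)
      _ ≤ (d:ℝ) * Real.exp (4.2 * cα) := by
          refine le_mul_of_one_le_left (Real.exp_nonneg _) ?_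
          exact_mod_cast hd
  calc ∑ m, ∑ n, gradEntry σ x y α k m n ^ 2
      ≤ ∑ m, ∑ n, (1 / (N:ℝ) * ∑ i0, (F i0 m n) ^ 2) := by
        refine Finset.sum_le_sum fun m _ => Finset.sum_le_sum fun n _ => ?_
        rw [hgrad m n]
        exact avg_sq hN _
    _ = 1 / (N:ℝ) * ∑ i0, ∑ m, ∑ n, (F i0 m n) ^ 2 := by
        simp only [← Finset.mul_sum]
        congr 1
        rw [show (∑ m, ∑ n, ∑ i0, (F i0 m n) ^ 2) = ∑ m, ∑ i0, ∑ n, (F i0 m n) ^ 2 from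
          Finset.sum_congr rfl fun m _ => Finset.sum_comm, Finset.sum_comm]
    _ ≤ 1 / (N:ℝ) * ∑ i0, ((L:ℝ)⁻¹ * Real.exp (4 * cα) * W i0) := by
        refine mul_le_mul_of_nonneg_left (Finset.sum_le_sum fun i0 _ => ?_) (by positivity)
        exact per_sample hσ hcα hL α hαsq (x i0) (y i0) (hxsq i0) k
    _ = (L:ℝ)⁻¹ * Real.exp (4 * cα) * (1 / (N:ℝ) * ∑ i0, W i0) := by
        rw [← Finset.mul_sum]; ring
    _ = (L:ℝ)⁻¹ * Real.exp (4 * cα) * (2 * loss σ x y α) := by rw [h2loss]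
    _ ≤ 2 * d * Real.exp (4.2 * cα) * (L : ℝ)⁻¹ * loss σ x y α := by
        have hLinv0 : (0:ℝ) ≤ (L:ℝ)⁻¹ := by positivity
        have hmul := mul_le_mul_of_nonneg_right hexp (mul_nonneg hLinv0 hloss0)
        calc (L:ℝ)⁻¹ * Real.exp (4 * cα) * (2 * loss σ x y α)
            = 2 * (Real.exp (4 * cα) * ((L:ℝ)⁻¹ * loss σ x y α)) := by ring
          _ ≤ 2 * ((d:ℝ) * Real.exp (4.2 * cα) * ((L:ℝ)⁻¹ * loss σ x y α)) := by linarith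
          _ = 2 * d * Real.exp (4.2 * cα) * (L : ℝ)⁻¹ * loss σ x y α := by ring
end
end
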